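/- Let k, q ∈ ℕ, let H be a k-labeled graph, and let i, a, b, a_1, …, a_q ∈ Fin k with a ≠ b and a, b ∉ {a_1, …, a_q, i}. Assume no operator occurrence on the left-hand side is useless. Then θ_i(ρ_{a_1→i}(⋯ ρ_{a_q→i}(η_{a,b}(H)) ⋯)) = η_{a,b}(θ_i(ρ_{a_1→i}(⋯ ρ_{a_q→i}(H) ⋯))) as k-labeled graphs, up to label-preserving isomorphism. -/

import Mathlib

/-! ### `k`-labeled graphs and the basic operations on them -/

/-- A `k`-labeled graph: a simple graph together with a labeling of its vertices
by labels from `Fin k`. -/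
structure LGraph (k : ℕ) where
  V : Type
  G : SimpleGraph V
  lab : V → Fin k

namespace LGraph

variable {k : ℕ}

/-- The join operation `η_{a,b}`: add all edges between vertices of label `a`
and vertices of label `b`. -/
def join (a b : Fin k) (H : LGraph k) : LGraph k where
  V := H.V
  G :=
    { Adj := fun u v =>
        H.G.Adj u v ∨ (u ≠ v ∧ ((H.lab u = a ∧ H.lab v = b) ∨ (H.lab u = b ∧ H.lab v = a)))
      symm := by
        constructor
        intro u v h
        rcases h with h | ⟨hne, h⟩
        · exact Or.inl (H.G.symm.symm _ _ h)
        · refine Or.inr ⟨hne.symm, ?_⟩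
          rcases h with ⟨h1, h2⟩ | ⟨h1, h2⟩
          · exact Or.inr ⟨h2, h1⟩
          · exact Or.inl ⟨h2, h1⟩
      loopless := by
        constructor
        intro v h
        rcases h with h | ⟨hne, _⟩
        · exact H.G.loopless.irrefl v h
        · exact hne rfl }
  lab := H.lab

/-- The relabel operation `ρ_{a→b}`: every vertex of label `a` gets label `b` instead. -/
def relabel (a b : Fin k) (H : LGraph k) : LGraph k where
  V := H.V
  G := H.G
  lab := fun v => if H.lab v = a then b else H.lab v

/-- The fuse operation `θ_i`: replace all vertices of label `i` by a single new vertex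
(represented by `none`) of label `i` whose neighbourhood is the union of their
neighbourhoods. -/
def fuse (i : Fin k) (H : LGraph k) : LGraph k where
  V := Option {v : H.V // H.lab v ≠ i}
  G :=
    { Adj := fun x y =>
        match x, y with
        | some u, some v => H.G.Adj u.1 v.1
        | some u, none => ∃ w, H.lab w = i ∧ H.G.Adj u.1 w
        | none, some v => ∃ w, H.lab w = i ∧ H.G.Adj w v.1
        | none, none => False
      symm := by
        constructor
        rintro (_ | u) (_ | v) h
        · exact h
        · obtain ⟨w, hw, ha⟩ := h
          exact ⟨w, hw, ha.symm⟩
        · obtain ⟨w, hw, ha⟩ := h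
          exact ⟨w, hw, ha.symm⟩
        · exact H.G.symm.symm _ _ h
      loopless := by
        constructor
        rintro (_ | v) h
        · exact h
        · exact H.G.loopless.irrefl v.1 h }
  lab := fun x =>
    match x with
    | some u => H.lab u.1
    | none => i

/-- Disjoint union `H1 ⊕ H2` of two `k`-labeled graphs. -/
def union (H1 H2 : LGraph k) : LGraph k where
  V := H1.V ⊕ H2.V
  G := H1.G ⊕g H2.G
  lab := Sum.elim H1.lab H2.lab

/-- Label-preserving isomorphism of `k`-labeled graphs. -/
def LIso (H1 H2 : LGraph k) : Prop :=
  ∃ e : H1.G ≃g H2.G, ∀ v, H2.lab (e v) = H1.lab v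

/-- The occurrence of the join operator `η_{a,b}` applied to `H` is not useless,
i.e. it creates at least one new edge. -/
def joinUseful (a b : Fin k) (H : LGraph k) : Prop :=
  ∃ u v : H.V, u ≠ v ∧ H.lab u = a ∧ H.lab v = b ∧ ¬ H.G.Adj u v

/-- The occurrence of the fuse operator `θ_i` applied to `H` is not useless,
i.e. `H` has at least two vertices of label `i`. -/
def fuseUseful (i : Fin k) (H : LGraph k) : Prop :=
  ∃ u v : H.V, u ≠ v ∧ H.lab u = i ∧ H.lab v = i

/-- The occurrence of a relabel operator `ρ_{a→b}` applied to `H` is not useless,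
i.e. `H` has a vertex of label `a`. -/
def relabelUseful (a : Fin k) (H : LGraph k) : Prop :=
  ∃ v : H.V, H.lab v = a

/-- `relabelSeq i [a₁, …, a_q] H = ρ_{a₁→i}(⋯(ρ_{a_q→i}(H))⋯)`. -/
def relabelSeq (i : Fin k) : List (Fin k) → LGraph k → LGraph k
  | [], H => H
  | a :: as, H => relabel a i (relabelSeq i as H)

/-- None of the relabel operators in `relabelSeq i as H` is useless (this includes
that none of them has the form `ρ_{a→a}`). -/
def relabelSeqUseful (i : Fin k) : List (Fin k) → LGraph k → Prop
  | [], _ => True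
  | a :: as, H => relabelSeqUseful i as H ∧ a ≠ i ∧ relabelUseful a (relabelSeq i as H)

end LGraph

open LGraph

/-- The effect of `relabelSeq` on a single label. -/
def labF {k : ℕ} (i : Fin k) : List (Fin k) → Fin k → Fin k
  | [], c => c
  | a :: as, c => if labF i as c = a then i else labF i as c

lemma labF_mem {k : ℕ} (i : Fin k) (as : List (Fin k)) (c : Fin k) :
    labF i as c = c ∨ labF i as c = i := by
  induction as with
  | nil => exact Or.inl rfl
  | cons a as ih =>
    simp only [labF]
    split
    · exact Or.inr rfl
    · exact ih

lemma labF_eq_self {k : ℕ} (i : Fin k) {as : List (Fin k)} {c : Fin k} (h : c ∉ as) :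
    labF i as c = c := by
  induction as with
  | nil => rfl
  | cons a as ih =>
    simp only [List.mem_cons, not_or] at h
    simp only [labF, ih h.2, if_neg h.1]

lemma relabelSeq_eq {k : ℕ} (i : Fin k) (as : List (Fin k)) (H : LGraph k) :
    relabelSeq i as H = ⟨H.V, H.G, fun v => labF i as (H.lab v)⟩ := by
  induction as with
  | nil => rfl
  | cons a as ih =>
    show relabel a i (relabelSeq i as H) = _
    rw [ih]
    rfl

/-- rule 5: if `a, b ∉ {a₁, …, a_q, i}`, then
`θ_i(ρ_{a₁→i}(⋯ρ_{a_q→i}(η_{a,b}(H))⋯)) = η_{a,b}(θ_i(ρ_{a₁→i}(⋯ρ_{a_q→i}(H)⋯)))`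
provided that no operator occurrence on the left-hand side is useless. -/
theorem fuse_relabelSeq_join_noSide {k : ℕ} (H : LGraph k) (i a b : Fin k)
    (as : List (Fin k)) (hab : a ≠ b)
    (ha : a ∉ as ∧ a ≠ i) (hb : b ∉ as ∧ b ≠ i)
    (hjoin : joinUseful a b H)
    (hseq : relabelSeqUseful i as (join a b H))
    (hfuse : fuseUseful i (relabelSeq i as (join a b H))) :
    LIso (fuse i (relabelSeq i as (join a b H)))
         (join a b (fuse i (relabelSeq i as H))) := by
  obtain ⟨ha1, ha2⟩ := ha
  obtain ⟨hb1, hb2⟩ := hb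
  rw [relabelSeq_eq i as (join a b H), relabelSeq_eq i as H]
  have hfa : ∀ v : H.V, labF i as (H.lab v) = a ↔ H.lab v = a := by
    intro v
    constructor
    · intro h
      rcases labF_mem i as (H.lab v) with h' | h'
      · rw [h'] at h; exact h
      · exact absurd (h'.symm.trans h).symm ha2
    · intro h; rw [h]; exact labF_eq_self i ha1
  have hfb : ∀ v : H.V, labF i as (H.lab v) = b ↔ H.lab v = b := by
    intro v
    constructor
    · intro h
      rcases labF_mem i as (H.lab v) with h' | h'
      · rw [h'] at h; exact h
      · exact absurd (h'.symm.trans h).symm hb2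
    · intro h; rw [h]; exact labF_eq_self i hb1
  have hia : ¬ (i = a) := fun h => ha2 h.symm
  have hib : ¬ (i = b) := fun h => hb2 h.symm
  refine ⟨⟨Equiv.refl _, ?_⟩, ?_⟩
  · intro x y
    rcases x with _ | u <;> rcases y with _ | v
    · -- none, none
      constructor
      · rintro (h | ⟨hne, _⟩)
        · exact h.elim
        · exact absurd rfl hne
      · rintro h; exact h.elim
    · -- none, some v
      constructor
      · rintro (⟨w, hw, hadj⟩ | ⟨_, (⟨h1, _⟩ | ⟨h1, _⟩)⟩)
        · exact ⟨w, hw, Or.inl hadj⟩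
        · exact absurd h1 hia
        · exact absurd h1 hib
      · rintro ⟨w, hw, (hadj | ⟨_, (⟨h1, _⟩ | ⟨h1, _⟩)⟩)⟩
        · exact Or.inl ⟨w, hw, hadj⟩
        · exact absurd (hw.symm.trans ((hfa w).mpr h1)) hia
        · exact absurd (hw.symm.trans ((hfb w).mpr h1)) hib
    · -- some u, none
      constructor
      · rintro (⟨w, hw, hadj⟩ | ⟨_, (⟨_, h2⟩ | ⟨_, h2⟩)⟩)
        · exact ⟨w, hw, Or.inl hadj⟩
        · exact absurd h2 hib
        · exact absurd h2 hia
      · rintro ⟨w, hw, (hadj | ⟨_, (⟨_, h2⟩ | ⟨_, h2⟩)⟩)⟩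
        · exact Or.inl ⟨w, hw, hadj⟩
        · exact absurd (hw.symm.trans ((hfb w).mpr h2)) hib
        · exact absurd (hw.symm.trans ((hfa w).mpr h2)) hia
    · -- some u, some v
      constructor
      · rintro (hadj | ⟨hne, hl⟩)
        · exact Or.inl hadj
        · refine Or.inr ⟨fun h => hne (congrArg some (Subtype.ext h)), ?_⟩
          rcases hl with ⟨h1, h2⟩ | ⟨h1, h2⟩
          · exact Or.inl ⟨(hfa u.1).mp h1, (hfb v.1).mp h2⟩
          · exact Or.inr ⟨(hfb u.1).mp h1, (hfa v.1).mp h2⟩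
      · rintro (hadj | ⟨hne, hl⟩)
        · exact Or.inl hadj
        · refine Or.inr ⟨?_, ?_⟩
          · intro hh
            injection hh with hh
            exact hne (congrArg Subtype.val hh)
          · rcases hl with ⟨h1, h2⟩ | ⟨h1, h2⟩
            · exact Or.inl ⟨(hfa u.1).mpr h1, (hfb v.1).mpr h2⟩
            · exact Or.inr ⟨(hfb u.1).mpr h1, (hfa v.1).mpr h2⟩
  · intro v
    rcases v with _ | u <;> rfl
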